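/- Under Poissonian photon-pair statistics with mean μ > 0, heralding detector efficiency η_B ∈ (0,1] and dark-count probability d_B ∈ [0,1), the probability that a heralded pulse carries more than one photon pair equals P_noqub = 1 - e^{-μ}[d_B(1+μ) + (1-d_B)μη_B] / (d_B + (1-d_B)(1-e^{-μη_B})), and this quantity is strictly increasing in μ for fixed x_B = μη_B and d_B. -/

import Mathlib

open Real

/-- Under Poissonian photon-pair statistics with mean μ, heralding efficiency η_B
and dark-count probability d_B, the probability that a heralded pulse carries more
than one photon pair equals
P_noqub = 1 - e^{-μ}[d_B(1+μ)+(1-d_B)μη_B]/(d_B+(1-d_B)(1-e^{-μη_B}))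
(conditioning on the heralding event, where the pulse has 0 pairs with Poisson
weight e^{-μ} heralded with probability d_B and 1 pair with Poisson weight μe^{-μ}
heralded with probability d_B+(1-d_B)η_B), and this quantity is strictly
increasing in μ for fixed x_B = μη_B and d_B. -/
theorem P_noqub_formula_and_mono (dB ηB μ : ℝ)
    (hdB0 : 0 ≤ dB) (hdB1 : dB < 1) (hηB0 : 0 < ηB) (hηB1 : ηB ≤ 1) (hμ : 0 < μ) :
    (1 - exp (-μ) * (dB * (1 + μ) + (1 - dB) * (μ * ηB)) /
          (dB + (1 - dB) * (1 - exp (-(μ * ηB)))) =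
        ((dB + (1 - dB) * (1 - exp (-(μ * ηB)))) -
            (exp (-μ) * dB + μ * exp (-μ) * (dB + (1 - dB) * ηB))) /
          (dB + (1 - dB) * (1 - exp (-(μ * ηB))))) ∧
      ∀ xB : ℝ, 0 < xB →
        StrictMonoOn
          (fun m : ℝ =>
            1 - exp (-m) * (dB * (1 + m) + (1 - dB) * xB) /
                  (dB + (1 - dB) * (1 - exp (-xB))))
          (Set.Ioi 0) := by
  have hC : ∀ y : ℝ, 0 < y → 0 < dB + (1 - dB) * (1 - exp (-y)) := by
    intro y hy
    have h1 : exp (-y) < 1 := exp_lt_one_iff.mpr (by linarith)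
    have h2 : 0 < (1 - dB) * (1 - exp (-y)) := mul_pos (by linarith) (by linarith)
    linarith
  constructor
  · have hD := (hC (μ * ηB) (mul_pos hμ hηB0)).ne'
    field_simp
    ring
  · intro xB hxB
    have hD := hC xB hxB
    set C := dB + (1 - dB) * (1 - exp (-xB)) with hCdef
    set c := (1 - dB) * xB with hcdef
    have hc : 0 < c := mul_pos (by linarith) hxB
    have key : ∀ m : ℝ, HasDerivAt
        (fun m : ℝ => 1 - exp (-m) * (dB * (1 + m) + c) / C)
        (exp (-m) * (dB * m + c) / C) m := by
      intro m
      have h1 : HasDerivAt (fun m : ℝ => exp (-m)) (-exp (-m)) m := by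
        simpa [Function.comp_def] using (Real.hasDerivAt_exp (-m)).comp m (hasDerivAt_neg m)
      have h2 : HasDerivAt (fun m : ℝ => dB * (1 + m) + c) dB m := by
        have := (((hasDerivAt_id m).const_add (1 : ℝ)).const_mul dB).add_const c
        simpa using this
      have h3 := (h1.mul h2).div_const C
      have h4 := (hasDerivAt_const m (1 : ℝ)).sub h3
      refine h4.congr_deriv ?_
      ring
    apply strictMonoOn_of_deriv_pos (convex_Ioi 0)
    · exact fun m _ => (key m).differentiableAt.continuousAt.continuousWithinAt
    · intro m hm
      rw [interior_Ioi] at hm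
      rw [(key m).deriv]
      have hm0 : (0 : ℝ) < m := hm
      have hnum : 0 < dB * m + c := by nlinarith
      positivity
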